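/- arXiv:1908.03038 — 2 statements merged into one kernel-verified Lean document; each statement's English description precedes it below -/
import Mathlib

section
/- Let Σ and N be Hermitian positive definite complex s×s matrices and set Σ̃ = Σ + N. Then N⁻¹ − Σ̃⁻¹ = N⁻¹ Σ Σ̃⁻¹, this matrix is Hermitian positive definite, and, defining Ñ = (√((I+Σ̃⁻¹)⁻¹) (N⁻¹ − Σ̃⁻¹) √((I+Σ̃⁻¹)⁻¹))⁻¹ and T = √(Σ̃(Σ̃+I)), one has the factorization Ñ + I = T (Σ⁻¹N + (Σ̃+I)⁻¹) √(I + Σ̃⁻¹). -/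
open Matrix
open scoped ComplexOrder Classical

/-- The (Hermitian positive semidefinite) square root of a positive semidefinite
complex matrix; junk value `0` if the matrix is not positive semidefinite.
For a Hermitian positive definite matrix this is its unique Hermitian positive
definite square root. -/
noncomputable def msqrt {s : ℕ} (A : Matrix (Fin s) (Fin s) ℂ) :
    Matrix (Fin s) (Fin s) ℂ :=
  if h : A.PosSemidef then h.1.eigenvectorUnitary.1 *
    diagonal ((↑) ∘ (√·) ∘ h.1.eigenvalues) * (star h.1.eigenvectorUnitary : Matrix (Fin s) (Fin s) ℂ)
  else 0

noncomputable def Matrix.PosSemidef.sqrt {s : ℕ} {A : Matrix (Fin s) (Fin s) ℂ}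
    (h : A.PosSemidef) : Matrix (Fin s) (Fin s) ℂ :=
  h.1.eigenvectorUnitary.1 *
    diagonal ((↑) ∘ (√·) ∘ h.1.eigenvalues) * (star h.1.eigenvectorUnitary : Matrix (Fin s) (Fin s) ℂ)

open scoped MatrixOrder in
lemma Matrix.PosSemidef.sqrt_eq_cfc_sqrt {s : ℕ} {A : Matrix (Fin s) (Fin s) ℂ}
    (h : A.PosSemidef) : h.sqrt = CFC.sqrt A := by
  rw [CFC.sqrt_eq_real_sqrt A (Matrix.nonneg_iff_posSemidef.mpr h), cfcₙ_eq_cfc, h.1.cfc_eq,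
    IsHermitian.cfc, Unitary.conjStarAlgAut_apply]
  rfl

lemma msqrt_eq_sqrt {s : ℕ} {A : Matrix (Fin s) (Fin s) ℂ}
    (h : A.PosSemidef) : msqrt A = h.sqrt := by
  rw [msqrt, dif_pos h]
  rfl

open scoped MatrixOrder in
lemma Matrix.PosSemidef.sqrt_mul_self {s : ℕ} {A : Matrix (Fin s) (Fin s) ℂ}
    (h : A.PosSemidef) : h.sqrt * h.sqrt = A := by
  rw [h.sqrt_eq_cfc_sqrt]
  exact CFC.sqrt_mul_sqrt_self A (Matrix.nonneg_iff_posSemidef.mpr h)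

open scoped MatrixOrder in
lemma Matrix.PosSemidef.posSemidef_sqrt {s : ℕ} {A : Matrix (Fin s) (Fin s) ℂ}
    (h : A.PosSemidef) : h.sqrt.PosSemidef := by
  rw [h.sqrt_eq_cfc_sqrt]
  exact Matrix.nonneg_iff_posSemidef.mp (CFC.sqrt_nonneg A)

open scoped MatrixOrder in
lemma Matrix.PosSemidef.eq_sqrt_of_sq_eq {s : ℕ} {A B : Matrix (Fin s) (Fin s) ℂ}
    (hA : A.PosSemidef) (hB : B.PosSemidef) (h : A ^ 2 = B) : A = hB.sqrt := by
  rw [hB.sqrt_eq_cfc_sqrt]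
  exact (CFC.sqrt_unique (by rw [← pow_two]; exact h) (Matrix.nonneg_iff_posSemidef.mpr hA)).symm

lemma posDef_conj {s : ℕ} {A B : Matrix (Fin s) (Fin s) ℂ}
    (hA : A.PosDef) (hB : IsUnit B) : (Bᴴ * A * B).PosDef := by
  refine posDef_iff_dotProduct_mulVec.mpr ⟨Matrix.isHermitian_conjTranspose_mul_mul B hA.1, fun x hx => ?_⟩
  have hBx : B *ᵥ x ≠ 0 := fun h =>
    hx (Matrix.mulVec_injective_iff_isUnit.mpr hB (h.trans (Matrix.mulVec_zero B).symm))
  have := hA.dotProduct_mulVec_pos hBx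
  simpa only [star_mulVec, dotProduct_mulVec, vecMul_vecMul, Matrix.mul_assoc] using this

lemma isUnit_of_sq_isUnit {s : ℕ} {C A : Matrix (Fin s) (Fin s) ℂ}
    (h : C * C = A) (hu : IsUnit A) : IsUnit C := by
  refine (Matrix.isUnit_iff_isUnit_det _).2 (isUnit_of_mul_isUnit_left (y := C.det) ?_)
  rw [← Matrix.det_mul, h]
  exact (Matrix.isUnit_iff_isUnit_det A).1 hu

lemma posDef_of_posSemidef_isUnit {s : ℕ} {A : Matrix (Fin s) (Fin s) ℂ}
    (hA : A.PosSemidef) (hu : IsUnit A) : A.PosDef := by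
  refine posDef_iff_dotProduct_mulVec.mpr ⟨hA.1, fun x hx => ?_⟩
  obtain ⟨C, hC, hCH⟩ : ∃ C : Matrix (Fin s) (Fin s) ℂ, C * C = A ∧ C.IsHermitian :=
    ⟨hA.sqrt, hA.sqrt_mul_self, hA.posSemidef_sqrt.1⟩
  have hCu : IsUnit C := isUnit_of_sq_isUnit hC hu
  have hCx : C *ᵥ x ≠ 0 := fun h =>
    hx (Matrix.mulVec_injective_iff_isUnit.mpr hCu (h.trans (Matrix.mulVec_zero _).symm))
  have key : star (C *ᵥ x) ⬝ᵥ (C *ᵥ x) = star x ⬝ᵥ (A *ᵥ x) := by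
    rw [star_mulVec, ← dotProduct_mulVec, Matrix.mulVec_mulVec, hCH.eq, hC]
  rw [← key]
  exact Matrix.dotProduct_star_self_pos_iff.mpr hCx

lemma comm_of_comm_inv {s : ℕ} {A B : Matrix (Fin s) (Fin s) ℂ} [Invertible B]
    (h : A * B⁻¹ = B⁻¹ * A) : A * B = B * A := by
  have h2 : B * (A * B⁻¹) * B = B * (B⁻¹ * A) * B := by rw [h]
  simp only [Matrix.mul_assoc] at h2
  rw [Matrix.inv_mul_of_invertible, mul_one, Matrix.mul_inv_cancel_left_of_invertible] at h2
  exact h2.symm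

/-- Let `S` and `N` be Hermitian positive definite complex `s × s` matrices and set
`Σ̃ = S + N`.  Then `N⁻¹ − Σ̃⁻¹ = N⁻¹ S Σ̃⁻¹`, this matrix is Hermitian positive
definite, and, with `Ñ = (√((I+Σ̃⁻¹)⁻¹) (N⁻¹ − Σ̃⁻¹) √((I+Σ̃⁻¹)⁻¹))⁻¹` and
`T = √(Σ̃(Σ̃+I))`, one has `Ñ + I = T (S⁻¹ N + (Σ̃+I)⁻¹) √(I + Σ̃⁻¹)`. -/
theorem stmt1 {s : ℕ} (S N : Matrix (Fin s) (Fin s) ℂ)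
    (hS : S.PosDef) (hN : N.PosDef) :
    N⁻¹ - (S + N)⁻¹ = N⁻¹ * S * (S + N)⁻¹ ∧
    (N⁻¹ - (S + N)⁻¹).PosDef ∧
    (msqrt ((1 + (S + N)⁻¹)⁻¹) * (N⁻¹ - (S + N)⁻¹) * msqrt ((1 + (S + N)⁻¹)⁻¹))⁻¹ + 1
      = msqrt ((S + N) * (S + N + 1)) * (S⁻¹ * N + (S + N + 1)⁻¹)
          * msqrt (1 + (S + N)⁻¹) := by
  set E := S + N with hEdef
  have hE : E.PosDef := hS.add hN
  haveI := hE.isUnit.invertible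
  haveI := hS.isUnit.invertible
  haveI := hN.isUnit.invertible
  have hE1 : (E + 1).PosDef := hE.add Matrix.PosDef.one
  haveI := hE1.isUnit.invertible
  have hX : (1 + E⁻¹).PosDef := Matrix.PosDef.one.add hE.inv
  haveI := hX.isUnit.invertible
  set X := 1 + E⁻¹ with hXdef
  -- Part 1
  have hSe : S = E - N := by rw [hEdef, add_sub_cancel_right]
  have key1 : N⁻¹ * S * E⁻¹ = N⁻¹ - E⁻¹ := by
    have h : N⁻¹ * S * E⁻¹ = N⁻¹ * (E * E⁻¹) - (N⁻¹ * N) * E⁻¹ := by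
      rw [hSe]; noncomm_ring
    rw [Matrix.mul_inv_of_invertible, Matrix.inv_mul_of_invertible, mul_one, one_mul] at h
    exact h
  have key2 : E⁻¹ * S * N⁻¹ = N⁻¹ - E⁻¹ := by
    have h : E⁻¹ * S * N⁻¹ = (E⁻¹ * E) * N⁻¹ - E⁻¹ * (N * N⁻¹) := by
      rw [hSe]; noncomm_ring
    rw [Matrix.mul_inv_of_invertible, Matrix.inv_mul_of_invertible, mul_one, one_mul] at h
    exact h
  -- Part 2
  set K := N + N * S⁻¹ * N with hKdef
  have hK : K.PosDef := by
    refine hN.add ?_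
    have h := posDef_conj hS.inv hN.isUnit
    rwa [hN.1.eq] at h
  haveI := hK.isUnit.invertible
  have hKalt : K = N * S⁻¹ * E := by
    rw [hKdef, hEdef]
    have h : N * S⁻¹ * (S + N) = N * (S⁻¹ * S) + N * S⁻¹ * N := by noncomm_ring
    rw [h, Matrix.inv_mul_of_invertible, mul_one]
  have hDK : N⁻¹ - E⁻¹ = K⁻¹ := by
    symm
    apply Matrix.inv_eq_right_inv
    rw [← key2, hKalt]
    calc N * S⁻¹ * E * (E⁻¹ * S * N⁻¹)
        = N * (S⁻¹ * (E * (E⁻¹ * (S * N⁻¹)))) := by noncomm_ring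
      _ = 1 := by
          rw [Matrix.mul_inv_cancel_left_of_invertible, Matrix.inv_mul_cancel_left_of_invertible,
            Matrix.mul_inv_of_invertible]
  have hD : (N⁻¹ - E⁻¹).PosDef := by rw [hDK]; exact hK.inv
  refine ⟨key1.symm, hD, ?_⟩
  -- Part 3
  set R := hX.posSemidef.sqrt with hRdef
  have hRR : R * R = X := hX.posSemidef.sqrt_mul_self
  have hRps : R.PosSemidef := hX.posSemidef.posSemidef_sqrt
  have hRpd : R.PosDef := posDef_of_posSemidef_isUnit hRps (isUnit_of_sq_isUnit hRR hX.isUnit)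
  haveI := hRpd.isUnit.invertible
  have cRX : R * X = X * R := by rw [← hRR]; exact (Matrix.mul_assoc R R R).symm
  have cRe : R * E⁻¹ = E⁻¹ * R := by
    have h := cRX
    rw [hXdef, mul_add, add_mul, mul_one, one_mul] at h
    exact add_left_cancel h
  have cRE : R * E = E * R := comm_of_comm_inv cRe
  set Q := hRpd.posSemidef.sqrt with hQdef
  have hQQ : Q * Q = R := hRpd.posSemidef.sqrt_mul_self
  have hQH : Q.IsHermitian := hRpd.posSemidef.posSemidef_sqrt.1
  have hQu : IsUnit Q := isUnit_of_sq_isUnit hQQ hRpd.isUnit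
  have cQR : Q * R = R * Q := by rw [← hQQ]; exact (Matrix.mul_assoc Q Q Q).symm
  have cQX : Q * X = X * Q := by
    calc Q * X = Q * R * R := by rw [← hRR, Matrix.mul_assoc]
      _ = R * Q * R := by rw [cQR]
      _ = R * (Q * R) := Matrix.mul_assoc R Q R
      _ = R * (R * Q) := by rw [cQR]
      _ = R * R * Q := (Matrix.mul_assoc R R Q).symm
      _ = X * Q := by rw [hRR]
  have cQe : Q * E⁻¹ = E⁻¹ * Q := by
    have h := cQX
    rw [hXdef, mul_add, add_mul, mul_one, one_mul] at h
    exact add_left_cancel h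
  have cQE : Q * E = E * Q := comm_of_comm_inv cQe
  -- identify the three square roots
  have hmsq1 : msqrt (1 + E⁻¹) = R := by
    rw [msqrt_eq_sqrt hX.posSemidef]
  have hmsq2 : msqrt ((1 + E⁻¹)⁻¹) = R⁻¹ := by
    have h : R⁻¹ = (hX.inv.posSemidef).sqrt := by
      refine (hRpd.inv.posSemidef).eq_sqrt_of_sq_eq hX.inv.posSemidef ?_
      rw [pow_two, ← Matrix.mul_inv_rev, hRR]
    rw [msqrt_eq_sqrt hX.inv.posSemidef, ← h]
  have hERpd : (E * R).PosDef := by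
    have h : E * R = Qᴴ * E * Q := by
      rw [hQH.eq, ← hQQ]
      calc E * (Q * Q) = (E * Q) * Q := by rw [Matrix.mul_assoc]
        _ = Q * E * Q := by rw [← cQE]
    rw [h]
    exact posDef_conj hE hQu
  have hsq : (E * R) ^ 2 = E * (E + 1) := by
    have h1 : (E * R) ^ 2 = E * E * (R * R) := by
      rw [pow_two]
      calc E * R * (E * R) = E * (R * E) * R := by noncomm_ring
        _ = E * (E * R) * R := by rw [cRE]
        _ = E * E * (R * R) := by noncomm_ring
    rw [h1, hRR, hXdef]
    have h2 : E * E * (1 + E⁻¹) = E * E + E * (E * E⁻¹) := by noncomm_ring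
    rw [h2, Matrix.mul_inv_of_invertible, mul_one]
    noncomm_ring
  have hEE1ps : (E * (E + 1)).PosSemidef := hsq ▸ (hERpd.posSemidef.pow 2)
  have hmsq3 : msqrt (E * (E + 1)) = E * R := by
    have h : E * R = hEE1ps.sqrt := (hERpd.posSemidef).eq_sqrt_of_sq_eq hEE1ps hsq
    rw [msqrt_eq_sqrt hEE1ps, ← h]
  rw [hmsq1, hmsq2, hmsq3, hDK]
  -- final algebra
  have hLHS : (R⁻¹ * K⁻¹ * R⁻¹)⁻¹ = R * (K * R) := by
    rw [Matrix.mul_inv_rev, Matrix.mul_inv_rev, Matrix.inv_inv_of_invertible,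
      Matrix.inv_inv_of_invertible]
  have hXinv : X⁻¹ = E * (E + 1)⁻¹ := by
    apply Matrix.inv_eq_right_inv
    have h : X * (E * (E + 1)⁻¹) = (X * E) * (E + 1)⁻¹ := by rw [Matrix.mul_assoc]
    have hXE : X * E = E + 1 := by
      rw [hXdef, add_mul, one_mul, Matrix.inv_mul_of_invertible]
    rw [h, hXE, Matrix.mul_inv_of_invertible]
  have hEM : E * (S⁻¹ * N + (E + 1)⁻¹) = K + X⁻¹ := by
    rw [mul_add, hXinv, hKdef]
    congr 1
    rw [hEdef, add_mul, ← Matrix.mul_assoc S S⁻¹ N, Matrix.mul_inv_of_invertible, one_mul]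
    simp [Matrix.mul_assoc]
  calc (R⁻¹ * K⁻¹ * R⁻¹)⁻¹ + 1 = R * (K * R) + 1 := by rw [hLHS]
    _ = R * (K * R) + R * (X⁻¹ * R) := by
        have hXRR : R * (X⁻¹ * R) = 1 := by
          rw [← hRR, Matrix.mul_inv_rev]
          simp only [Matrix.mul_assoc]
          rw [Matrix.inv_mul_of_invertible, mul_one, Matrix.mul_inv_of_invertible]
        rw [hXRR]
    _ = R * ((K + X⁻¹) * R) := by noncomm_ring
    _ = R * ((E * (S⁻¹ * N + (E + 1)⁻¹)) * R) := by rw [hEM]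
    _ = (R * E) * (S⁻¹ * N + (E + 1)⁻¹) * R := by noncomm_ring
    _ = E * R * (S⁻¹ * N + (E + 1)⁻¹) * R := by rw [cRE]
end

section
/- Let s ∈ ℕ, and let ω_1, …, ω_s > 0, n_1, …, n_s ≥ 0 be real numbers. Let ν > 0 and set s*_j = max(ν/ω_j − n_j − 1, 0) and E = Σ_j ω_j s*_j. Then for every t = (t_1, …, t_s) with t_j ≥ 0 and Σ_j ω_j t_j ≤ E, one has Σ_j log(1 + t_j/(n_j+1)) ≤ Σ_j log(1 + s*_j/(n_j+1)); that is, the supremum of Σ_j log(1 + t_j/(n_j+1)) over the constraint set equals Σ_j log(1 + s*_j/(n_j+1)) and is attained at the water-filling point s*. -/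
open scoped BigOperators

/-- Water-filling: let `ω_j > 0`, `n_j ≥ 0`, `ν > 0`; set
`s*_j = max (ν/ω_j − n_j − 1) 0` and `E = Σ_j ω_j s*_j`.  Then
`Σ_j log (1 + s*_j/(n_j+1))` is the greatest value of
`Σ_j log (1 + t_j/(n_j+1))` over all `t` with `t_j ≥ 0` and `Σ_j ω_j t_j ≤ E`,
attained at the water-filling point `s*`. -/
theorem stmt13 (s : ℕ) (ω n : Fin s → ℝ) (hω : ∀ j, 0 < ω j) (hn : ∀ j, 0 ≤ n j)
    (ν : ℝ) (hν : 0 < ν)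
    (sstar : Fin s → ℝ) (hsstar : sstar = fun j => max (ν / ω j - n j - 1) 0)
    (E : ℝ) (hE : E = ∑ j, ω j * sstar j) :
    IsGreatest
      ((fun t : Fin s → ℝ => ∑ j, Real.log (1 + t j / (n j + 1))) ''
        {t | (∀ j, 0 ≤ t j) ∧ ∑ j, ω j * t j ≤ E})
      (∑ j, Real.log (1 + sstar j / (n j + 1))) := by
  have hs0 : ∀ j, 0 ≤ sstar j := fun j => by rw [hsstar]; exact le_max_right _ _
  constructor
  · exact ⟨sstar, ⟨hs0, le_of_eq hE.symm⟩, rfl⟩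
  · rintro x ⟨t, ⟨ht0, htE⟩, rfl⟩
    simp only
    have key : ∀ j, Real.log (1 + t j / (n j + 1)) - Real.log (1 + sstar j / (n j + 1))
        ≤ ω j * (t j - sstar j) / ν := by
      intro j
      have ha : (0:ℝ) < n j + 1 := by linarith [hn j]
      have hwj := hω j
      have hA : (0:ℝ) < 1 + t j / (n j + 1) := by
        have := ht0 j; positivity
      have hB : (0:ℝ) < 1 + sstar j / (n j + 1) := by
        have := hs0 j; positivity
      have has : (0:ℝ) < n j + 1 + sstar j := by linarith [hs0 j]
      have h1 : Real.log (1 + t j / (n j + 1)) - Real.log (1 + sstar j / (n j + 1))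
          ≤ (t j - sstar j) / (n j + 1 + sstar j) := by
        have hlog := Real.log_le_sub_one_of_pos (div_pos hA hB)
        rw [Real.log_div hA.ne' hB.ne'] at hlog
        have heq : (1 + t j / (n j + 1)) / (1 + sstar j / (n j + 1)) - 1
            = (t j - sstar j) / (n j + 1 + sstar j) := by
          field_simp
          ring
        linarith [heq ▸ hlog]
      refine h1.trans ?_
      rcases le_or_gt (ν / ω j - n j - 1) 0 with h | h
      · have hz : sstar j = 0 := by rw [hsstar]; exact max_eq_right h
        have hνa : ν ≤ ω j * (n j + 1) := by
          have := (div_le_iff₀ hwj).mp (by linarith : ν / ω j ≤ n j + 1)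
          linarith [this]
        rw [hz]
        rw [div_le_div_iff₀ (by linarith) hν]
        have := ht0 j
        nlinarith
      · have hz : sstar j = ν / ω j - n j - 1 := by rw [hsstar]; exact max_eq_left h.le
        have : n j + 1 + sstar j = ν / ω j := by rw [hz]; ring
        rw [this, div_div_eq_mul_div, mul_comm]
    have hsum : ∑ j, (Real.log (1 + t j / (n j + 1)) - Real.log (1 + sstar j / (n j + 1)))
        ≤ ∑ j, ω j * (t j - sstar j) / ν :=
      Finset.sum_le_sum fun j _ => key j
    have hrhs : ∑ j, ω j * (t j - sstar j) / ν ≤ 0 := by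
      have heq : ∑ j, ω j * (t j - sstar j) / ν
          = (∑ j, ω j * t j - ∑ j, ω j * sstar j) / ν := by
        rw [← Finset.sum_sub_distrib, Finset.sum_div]
        congr 1
        ext j
        rw [mul_sub, sub_div]
      rw [heq]
      apply div_nonpos_of_nonpos_of_nonneg _ hν.le
      rw [← hE]
      linarith
    rw [Finset.sum_sub_distrib] at hsum
    linarith
end
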